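/- If v₂(a) = 2j is even with 2j ≤ n − 3 and the odd part of a is congruent to 1 mod 8, then x² ≡ a (mod 2^n) has exactly 2^(j+2) solutions in ℤ/2^nℤ. -/

import Mathlib

-- L1: Hensel lifting for square roots mod powers of 2
lemma exists_sqrt_two_pow (c : ℤ) (hc : (8:ℤ) ∣ c - 1) :
    ∀ m : ℕ, ∃ y : ℤ, Odd y ∧ (2:ℤ)^m ∣ y^2 - c := by
  intro m
  induction m with
  | zero => exact ⟨1, odd_one, by simp⟩
  | succ k ih =>
    by_cases hk : k < 3
    · refine ⟨1, odd_one, ?_⟩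
      have h8 : (2:ℤ)^(k+1) ∣ 8 := by
        have : (8:ℤ) = 2^3 := by norm_num
        rw [this]; exact pow_dvd_pow 2 (by omega)
      calc (2:ℤ)^(k+1) ∣ 8 := h8
        _ ∣ 1^2 - c := by simpa using (dvd_neg.mpr hc)
    · obtain ⟨r, rfl⟩ : ∃ r, k = r + 3 := ⟨k - 3, by omega⟩
      obtain ⟨y, hy, t, ht⟩ := ih
      rcases Int.even_or_odd t with ⟨s, hs⟩ | hodd
      · exact ⟨y, hy, s, by rw [ht, hs]; ring⟩
      · obtain ⟨u, hu⟩ := hy.add_odd hodd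
        refine ⟨y + 2^(r+2), ?_, u + 2^r, ?_⟩
        · rcases hy with ⟨w, hw⟩
          exact ⟨w + 2^(r+1), by rw [hw]; ring⟩
        · have : t + y = 2 * u := by linarith [hu]
          linear_combination ht + 2^(r+3) * this

lemma not_cast_eq_zero {m k : ℕ} (h0 : 0 < k) (hlt : k < m) : ((k:ℕ) : ZMod m) ≠ 0 := by
  rw [Ne, ZMod.natCast_eq_zero_iff]
  exact fun hd => absurd (Nat.le_of_dvd h0 hd) (by omega)

lemma my_sq_eq_one_iff (m : ℕ) (hm : 3 ≤ m) (y : ZMod (2^m)) :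
    y^2 = 1 ↔ y = 1 ∨ y = -1 ∨ y = ((2^(m-1) : ℕ) : ZMod (2^m)) - 1
      ∨ y = ((2^(m-1) : ℕ) : ZMod (2^m)) + 1 := by
  haveI : NeZero (2^m) := ⟨by positivity⟩
  have hpred : m - 1 + 1 = m := by omega
  set H : ZMod (2^m) := ((2^(m-1) : ℕ) : ZMod (2^m)) with hH
  have h2H : 2 * H = 0 := by
    have hnat : (2 * 2^(m-1) : ℕ) = 2^m := by rw [← pow_succ', hpred]
    rw [hH, show (2 : ZMod (2^m)) * ((2^(m-1):ℕ):ZMod (2^m)) = ((2*2^(m-1) :ℕ) : ZMod (2^m)) by push_cast; ring, hnat, ZMod.natCast_self]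
  have hHsq : H * H = 0 := by
    rw [hH, ← Nat.cast_mul, ZMod.natCast_eq_zero_iff, ← pow_add]
    exact pow_dvd_pow 2 (by omega)
  have hzz : ((2:ZMod (2^m)))^m = 0 := by
    rw [show ((2:ZMod (2^m))) = ((2:ℕ) : ZMod (2^m)) by push_cast; ring, ← Nat.cast_pow,
      ZMod.natCast_self]
  have hHz : ((2:ZMod (2^m)))^(m-1) = H := by
    rw [hH, show ((2:ZMod (2^m))) = ((2:ℕ) : ZMod (2^m)) by push_cast; ring, ← Nat.cast_pow]
  constructor
  · intro hsq
    set Y : ℤ := (y.val : ℤ) with hYdef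
    have hyY : ((Y : ℤ) : ZMod (2^m)) = y := by
      rw [hYdef]; push_cast; rw [ZMod.natCast_val, ZMod.cast_id]
    have hdvd : ((2:ℤ)^m) ∣ Y^2 - 1 := by
      have h0 : ((Y^2 - 1 : ℤ) : ZMod (2^m)) = 0 := by push_cast [hyY]; rw [hsq]; ring
      rwa [ZMod.intCast_zmod_eq_zero_iff_dvd, Nat.cast_pow, Nat.cast_ofNat] at h0
    have hYodd : Odd Y := by
      have h2 : (2:ℤ) ∣ Y^2 - 1 := dvd_trans (by simpa using pow_dvd_pow (2:ℤ) (show 1 ≤ m by omega)) hdvd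
      rcases h2 with ⟨k, hk⟩
      have : Odd (Y^2) := ⟨k, by linarith⟩
      exact (Int.odd_pow.mp this).resolve_right (by norm_num)
    obtain ⟨w, hw⟩ := hYodd
    have h4 : (2:ℤ)^m ∣ 4 * (w * (w+1)) := by
      have he : Y^2 - 1 = 4 * (w * (w+1)) := by rw [hw]; ring
      rwa [he] at hdvd
    have hm2 : (2:ℤ)^(m-2) ∣ w * (w+1) := by
      have h4' : (2:ℤ)^m = 4 * 2^(m-2) := by
        rw [show (4:ℤ) = 2^2 by norm_num, ← pow_add]; congr 1; omega
      rw [h4'] at h4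
      exact (mul_dvd_mul_iff_left (by norm_num : (4:ℤ) ≠ 0)).mp h4
    have hpow21 : (2:ℤ)^(m-1) = 2 * 2^(m-2) := by
      rw [← pow_succ']; congr 1; omega
    have key : (2:ℤ)^(m-1) ∣ Y - 1 ∨ (2:ℤ)^(m-1) ∣ Y + 1 := by
      rcases Int.even_or_odd w with hwe | hwo
      · left
        have hcop : IsCoprime ((2:ℤ)^(m-2)) (w+1) := by
          refine IsCoprime.pow_left ?_
          rw [Int.prime_two.coprime_iff_not_dvd]
          rcases hwe with ⟨v, hv⟩
          intro ⟨u, hu⟩; omega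
        obtain ⟨v, hv⟩ := hcop.dvd_of_dvd_mul_right hm2
        exact ⟨v, by rw [hw, hpow21]; linarith [hv]⟩
      · right
        have hcop : IsCoprime ((2:ℤ)^(m-2)) w := by
          refine IsCoprime.pow_left ?_
          rw [Int.prime_two.coprime_iff_not_dvd]
          rcases hwo with ⟨v, hv⟩
          intro ⟨u, hu⟩; omega
        have hm2' : (2:ℤ)^(m-2) ∣ (w+1) * w := by rwa [mul_comm] at hm2
        obtain ⟨v, hv⟩ := hcop.dvd_of_dvd_mul_right hm2'
        exact ⟨v, by rw [hw, hpow21]; linarith [hv]⟩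
    rcases key with ⟨t, ht⟩ | ⟨t, ht⟩
    · rcases Int.even_or_odd t with ⟨s, hs⟩ | ⟨s, hs⟩
      · left
        rw [← hyY, show Y = 1 + 2^m * s by
          rw [hs] at ht
          have hp : (2:ℤ)^m = 2^(m-1) * 2 := by rw [← pow_succ, hpred]
          rw [hp]; linarith [ht]]
        push_cast
        rw [hzz]; ring
      · right; right; right
        rw [← hyY, show Y = 1 + 2^(m-1) + 2^m * s by
          rw [hs] at ht
          have hp : (2:ℤ)^m = 2^(m-1) * 2 := by rw [← pow_succ, hpred]
          rw [hp]; linarith [ht]]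
        push_cast
        rw [hzz, hHz]; ring
    · rcases Int.even_or_odd t with ⟨s, hs⟩ | ⟨s, hs⟩
      · right; left
        rw [← hyY, show Y = -1 + 2^m * s by
          rw [hs] at ht
          have hp : (2:ℤ)^m = 2^(m-1) * 2 := by rw [← pow_succ, hpred]
          rw [hp]; linarith [ht]]
        push_cast
        rw [hzz]; ring
      · right; right; left
        rw [← hyY, show Y = -1 + 2^(m-1) + 2^m * s by
          rw [hs] at ht
          have hp : (2:ℤ)^m = 2^(m-1) * 2 := by rw [← pow_succ, hpred]
          rw [hp]; linarith [ht]]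
        push_cast
        rw [hzz, hHz]; ring
  · intro h
    rcases h with rfl | rfl | rfl | rfl
    · ring
    · ring
    · have he : (H - 1)^2 = H*H - 2*H + 1 := by ring
      rw [he, hHsq, h2H]; ring
    · have he : (H + 1)^2 = H*H + 2*H + 1 := by ring
      rw [he, hHsq, h2H]; ring

lemma card_sqrt_one (m : ℕ) (hm : 3 ≤ m) :
    Nat.card {y : ZMod (2^m) // y^2 = 1} = 4 := by
  haveI : NeZero (2^m) := ⟨by positivity⟩
  set H : ZMod (2^m) := ((2^(m-1) : ℕ) : ZMod (2^m)) with hH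
  have h8 : 8 ≤ 2^m := by
    calc (8:ℕ) = 2^3 := by norm_num
    _ ≤ 2^m := Nat.pow_le_pow_right (by norm_num) hm
  have h4m : 4 ≤ 2^(m-1) := by
    calc (4:ℕ) = 2^2 := by norm_num
    _ ≤ 2^(m-1) := Nat.pow_le_pow_right (by norm_num) (by omega)
  have hmlt : 2^(m-1) < 2^m := Nat.pow_lt_pow_right (by norm_num) (by omega)
  have hdbl : 2^m = 2*2^(m-1) := by rw [← pow_succ']; congr 1; omega
  have cast2 : ((2:ℕ) : ZMod (2^m)) = 2 := by push_cast; ring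
  -- distinctness
  have d1 : (1 : ZMod (2^m)) ≠ -1 := by
    intro h
    have : ((2:ℕ) : ZMod (2^m)) = 0 := by rw [cast2]; linear_combination h
    exact not_cast_eq_zero (by norm_num) (by omega) this
  have dH0 : H ≠ 0 := not_cast_eq_zero (by positivity) hmlt
  have d2 : (1 : ZMod (2^m)) ≠ H - 1 := by
    intro h
    have : ((2^(m-1) - 2 : ℕ) : ZMod (2^m)) = 0 := by
      rw [Nat.cast_sub (by omega), cast2, ← hH]; linear_combination -h
    exact not_cast_eq_zero (by omega) (by omega) this
  have d3 : (1 : ZMod (2^m)) ≠ H + 1 := by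
    intro h; exact dH0 (by linear_combination -h)
  have d4 : (-1 : ZMod (2^m)) ≠ H - 1 := by
    intro h; exact dH0 (by linear_combination -h)
  have d5 : (-1 : ZMod (2^m)) ≠ H + 1 := by
    intro h
    have : ((2^(m-1) + 2 : ℕ) : ZMod (2^m)) = 0 := by
      rw [Nat.cast_add, cast2, ← hH]; linear_combination -h
    exact not_cast_eq_zero (by omega) (by omega) this
  have d6 : (H - 1 : ZMod (2^m)) ≠ H + 1 := by
    intro h; exact d1 (by linear_combination -h)
  rw [Nat.card_eq_fintype_card, Fintype.card_subtype]
  have hfil : Finset.filter (fun y : ZMod (2^m) => y^2 = 1) Finset.univ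
      = ({1, -1, H - 1, H + 1} : Finset (ZMod (2^m))) := by
    ext y
    simp only [Finset.mem_filter, Finset.mem_univ, true_and, Finset.mem_insert,
      Finset.mem_singleton]
    exact my_sq_eq_one_iff m hm y
  rw [hfil]
  rw [Finset.card_insert_of_notMem (by simp [d1, d2, d3]),
    Finset.card_insert_of_notMem (by simp [d4, d5]),
    Finset.card_insert_of_notMem (by simp [d6]),
    Finset.card_singleton]

lemma card_sqrt (m : ℕ) (hm : 3 ≤ m) (c : ℤ) (hc : (8:ℤ) ∣ c - 1) :
    Nat.card {y : ZMod (2^m) // y^2 = (c : ZMod (2^m))} = 4 := by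
  obtain ⟨y, hyodd, hdvd⟩ := exists_sqrt_two_pow c hc m
  set Y := y.natAbs with hYdef
  have hY2 : ((Y:ℕ) : ZMod (2^m))^2 = (c : ZMod (2^m)) := by
    have h1 : ((Y:ℤ))^2 = y^2 := by rw [hYdef]; exact Int.natAbs_sq y ▸ by push_cast [Int.natAbs_sq]; ring
    have h2 : ((y^2 : ℤ) : ZMod (2^m)) = (c : ZMod (2^m)) := by
      rw [ZMod.intCast_eq_intCast_iff]
      exact Int.ModEq.symm (Int.modEq_iff_dvd.mpr (by push_cast; exact hdvd))
    calc ((Y:ℕ) : ZMod (2^m))^2 = (((Y:ℤ) : ZMod (2^m)))^2 := by push_cast; ring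
      _ = ((((Y:ℤ))^2 : ℤ) : ZMod (2^m)) := by push_cast; ring
      _ = ((y^2 : ℤ) : ZMod (2^m)) := by rw [h1]
      _ = _ := h2
  have hcop : Nat.Coprime Y (2^m) := by
    refine Nat.Coprime.pow_right _ ?_
    rw [Nat.coprime_two_right]
    exact Int.natAbs_odd.mpr hyodd
  set u : (ZMod (2^m))ˣ := ZMod.unitOfCoprime Y hcop with hu
  have hucoe : (u : ZMod (2^m)) = ((Y:ℕ) : ZMod (2^m)) := ZMod.coe_unitOfCoprime Y hcop
  have hu2 : ((u : ZMod (2^m)))^2 = (c : ZMod (2^m)) := by rw [hucoe]; exact hY2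
  have e : {z : ZMod (2^m) // z^2 = (c : ZMod (2^m))} ≃ {z : ZMod (2^m) // z^2 = 1} := by
    refine ⟨fun z => ⟨z.1 * ↑u⁻¹, ?_⟩, fun z => ⟨z.1 * ↑u, ?_⟩, ?_, ?_⟩
    · rw [mul_pow, z.2, ← hu2, ← mul_pow]
      norm_cast
      rw [mul_inv_cancel]
      simp
    · rw [mul_pow, z.2, one_mul, hu2]
    · intro z; ext; simp [mul_assoc]
    · intro z; ext; simp [mul_assoc]
  rw [Nat.card_congr e, card_sqrt_one m hm]

lemma card_comap (d e : ℕ) (hd : 0 < d) (he : 0 < e) (P : ZMod d → Prop) [DecidablePred P] :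
    Nat.card {y : ZMod (d * e) // P ((y.val : ZMod d))} = Nat.card {z : ZMod d // P z} * e := by
  haveI : NeZero d := ⟨by omega⟩
  haveI : NeZero e := ⟨by omega⟩
  haveI : NeZero (d*e) := ⟨by positivity⟩
  have cast_zero : ∀ zv qv : ℕ, ((zv + d * qv : ℕ) : ZMod d) = ((zv : ℕ) : ZMod d) := by
    intro zv qv
    push_cast [ZMod.natCast_self]
    ring
  have hlt : ∀ (z : ZMod d) (q : ZMod e), z.val + d * q.val < d * e := by
    intro z q
    have hz := ZMod.val_lt z
    have hq := ZMod.val_lt q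
    calc z.val + d * q.val < d + d * q.val := by omega
      _ = d * (q.val + 1) := by ring
      _ ≤ d * e := Nat.mul_le_mul_left d hq
  have E : {y : ZMod (d * e) // P ((y.val : ZMod d))} ≃ {z : ZMod d // P z} × ZMod e := by
    refine ⟨fun y => (⟨((y.1.val : ℕ) : ZMod d), y.2⟩, ((y.1.val / d : ℕ) : ZMod e)),
      fun p => ⟨((p.1.1.val + d * p.2.val : ℕ) : ZMod (d*e)), ?_⟩, ?_, ?_⟩
    · rw [ZMod.val_natCast_of_lt (hlt p.1.1 p.2), cast_zero, ZMod.natCast_zmod_val]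
      exact p.1.2
    · intro y
      ext
      have h1 : ((y.1.val : ℕ) : ZMod d).val = y.1.val % d := ZMod.val_natCast _ _
      have h2 : ((y.1.val / d : ℕ) : ZMod e).val = y.1.val / d := by
        exact ZMod.val_natCast_of_lt ((Nat.div_lt_iff_lt_mul hd).mpr
          (lt_of_lt_of_eq (ZMod.val_lt y.1) (mul_comm d e)))
      simp only [h1, h2, Nat.mod_add_div, ZMod.natCast_zmod_val]
    · intro p
      have hv : ((p.1.1.val + d * p.2.val : ℕ) : ZMod (d*e)).val = p.1.1.val + d * p.2.val :=
        ZMod.val_natCast_of_lt (hlt p.1.1 p.2)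
      refine Prod.ext ?_ ?_
      · ext
        simp only [hv, cast_zero, ZMod.natCast_zmod_val]
      · simp only [hv]
        rw [Nat.add_mul_div_left _ _ hd, Nat.div_eq_of_lt (ZMod.val_lt p.1.1), zero_add,
          ZMod.natCast_zmod_val]
  rw [Nat.card_congr E, Nat.card_prod, Nat.card_zmod]

lemma cast_sq_eq_iff (M : ℕ) (v : ℕ) (c : ℤ) :
    ((v : ZMod M))^2 = (c : ZMod M) ↔ (M:ℤ) ∣ (v:ℤ)^2 - c := by
  have h : ((v:ℕ) : ZMod M) = (((v:ℤ)) : ZMod M) := by push_cast; ring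
  rw [h, ← Int.cast_pow, ZMod.intCast_eq_intCast_iff, Int.modEq_iff_dvd, dvd_sub_comm]

theorem stmt_17 (n : ℕ) (hn : 3 ≤ n) (a : ℤ) (ha : a ≠ 0) (j : ℕ)
    (hval : padicValInt 2 a = 2 * j) (hjn : 2 * j ≤ n - 3)
    (hodd : a / 2 ^ (2 * j) ≡ 1 [ZMOD 8]) :
    Nat.card {x : ZMod (2 ^ n) // x ^ 2 = (a : ZMod (2 ^ n))} = 2 ^ (j + 2) := by
  have h2jn : 2*j + 3 ≤ n := by omega
  set m := n - 2*j with hmdef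
  have hm3 : 3 ≤ m := by omega
  set b := a / 2^(2*j) with hbdef
  have hdvda : (2:ℤ)^(2*j) ∣ a := by
    have h := padicValInt_dvd (p := 2) a
    rw [hval] at h
    exact_mod_cast h
  have hab : a = 2^(2*j) * b := (Int.mul_ediv_cancel' hdvda).symm
  have hb8 : (8:ℤ) ∣ b - 1 := (Int.ModEq.dvd hodd.symm)
  set K := 2^m * 2^j with hKdef
  have hKn : 2^j * K = 2^n := by
    rw [hKdef, ← mul_assoc, ← pow_add, ← pow_add]; congr 1; omega
  have h2jm : 2*j + m = n := by omega
  haveI : NeZero (2^n) := ⟨by positivity⟩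
  haveI : NeZero K := ⟨by positivity⟩
  haveI : NeZero (2^m) := ⟨by positivity⟩
  have hpowint : ((2:ℤ)^n) = 2^(2*j) * 2^m := by rw [← pow_add, h2jm]
  -- the map
  set S1 := {x : ZMod (2 ^ n) // x ^ 2 = (a : ZMod (2 ^ n))} with hS1
  set S2 := {y : ZMod K // ((y.val : ZMod (2^m)))^2 = (b : ZMod (2^m))} with hS2
  have hψcond : ∀ y : S2, (((2^j * y.1.val : ℕ) : ZMod (2^n)))^2 = (a : ZMod (2^n)) := by
    intro y
    rw [cast_sq_eq_iff]
    have hc := (cast_sq_eq_iff (2^m) y.1.val b).mp y.2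
    have hc' : (2:ℤ)^m ∣ (y.1.val:ℤ)^2 - b := by exact_mod_cast hc
    have key : ((2^j * y.1.val : ℕ):ℤ)^2 - a = 2^(2*j) * (((y.1.val:ℤ))^2 - b) := by
      push_cast
      rw [hab]
      ring
    rw [key]
    push_cast [hpowint]
    exact mul_dvd_mul_left _ hc'
  set ψ : S2 → S1 := fun y => ⟨((2^j * y.1.val : ℕ) : ZMod (2^n)), hψcond y⟩ with hψ
  have hinj : Function.Injective ψ := by
    intro y₁ y₂ h
    have hlt1 : 2^j * y₁.1.val < 2^n := by
      rw [← hKn]; exact (Nat.mul_lt_mul_left (by positivity)).mpr (ZMod.val_lt y₁.1)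
    have hlt2 : 2^j * y₂.1.val < 2^n := by
      rw [← hKn]; exact (Nat.mul_lt_mul_left (by positivity)).mpr (ZMod.val_lt y₂.1)
    have heq : ((2^j * y₁.1.val : ℕ) : ZMod (2^n)) = ((2^j * y₂.1.val : ℕ) : ZMod (2^n)) :=
      congrArg Subtype.val h
    have hnat : 2^j * y₁.1.val = 2^j * y₂.1.val := by
      rw [← ZMod.val_natCast_of_lt hlt1, ← ZMod.val_natCast_of_lt hlt2, heq]
    have hval : y₁.1.val = y₂.1.val := Nat.eq_of_mul_eq_mul_left (by positivity) hnat
    exact Subtype.ext (by rw [← ZMod.natCast_zmod_val y₁.1, ← ZMod.natCast_zmod_val y₂.1, hval])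
  have hsurj : Function.Surjective ψ := by
    intro x
    set X := x.1.val with hX
    have hx2 : ((X : ZMod (2^n)))^2 = (a : ZMod (2^n)) := by
      rw [hX, ZMod.natCast_zmod_val]; exact x.2
    have hdx : ((2^n : ℕ):ℤ) ∣ (X:ℤ)^2 - a := (cast_sq_eq_iff (2^n) X a).mp hx2
    have hdx' : (2:ℤ)^n ∣ (X:ℤ)^2 - a := by exact_mod_cast hdx
    have hd2j : ((2:ℤ)^j)^2 ∣ (X:ℤ)^2 := by
      rw [← pow_mul, mul_comm j 2]
      have h1 : (2:ℤ)^(2*j) ∣ (X:ℤ)^2 - a := dvd_trans (hpowint ▸ Dvd.intro _ rfl) hdx'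
      have h2 : (2:ℤ)^(2*j) ∣ a := hdvda
      simpa using dvd_add h1 h2
    have hXd : (2:ℤ)^j ∣ (X:ℤ) := (Int.pow_dvd_pow_iff (by norm_num : (2:ℕ) ≠ 0)).mp hd2j
    have hXdn : 2^j ∣ X := by
      have h : ((2^j : ℕ):ℤ) ∣ (X:ℤ) := by exact_mod_cast hXd
      exact_mod_cast h
    set Y := X / 2^j with hYdef
    have hXY : X = 2^j * Y := (Nat.mul_div_cancel' hXdn).symm
    have hYlt : Y < K := by
      rw [hYdef, Nat.div_lt_iff_lt_mul (by positivity : 0 < 2^j), mul_comm K]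
      rw [hKn]
      exact ZMod.val_lt x.1
    have hcond : (((((Y:ℕ) : ZMod K)).val : ZMod (2^m)))^2 = (b : ZMod (2^m)) := by
      rw [ZMod.val_natCast_of_lt hYlt, cast_sq_eq_iff]
      have key : (2:ℤ)^(2*j) * ((Y:ℤ)^2 - b) = (X:ℤ)^2 - a := by
        rw [hab]
        have : (X:ℤ) = 2^j * (Y:ℤ) := by exact_mod_cast hXY
        rw [this]; ring
      have h2 : (2:ℤ)^(2*j) * (2:ℤ)^m ∣ (2:ℤ)^(2*j) * ((Y:ℤ)^2 - b) := by
        rw [key, ← hpowint]; exact hdx'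
      have := (mul_dvd_mul_iff_left (by positivity : (2:ℤ)^(2*j) ≠ 0)).mp h2
      exact_mod_cast this
    refine ⟨⟨((Y:ℕ) : ZMod K), hcond⟩, ?_⟩
    apply Subtype.ext
    show ((2^j * (((Y:ℕ) : ZMod K)).val : ℕ) : ZMod (2^n)) = x.1
    rw [ZMod.val_natCast_of_lt hYlt, ← hXY, hX, ZMod.natCast_zmod_val]
  have hcard12 : Nat.card S1 = Nat.card S2 :=
    (Nat.card_eq_of_bijective ψ ⟨hinj, hsurj⟩).symm
  have hcard2 : Nat.card S2 = Nat.card {z : ZMod (2^m) // z^2 = (b : ZMod (2^m))} * 2^j :=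
    card_comap (2^m) (2^j) (by positivity) (by positivity) (fun z => z^2 = (b : ZMod (2^m)))
  rw [hcard12, hcard2, card_sqrt m hm3 b hb8]
  rw [pow_add]; ring
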